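/- Let R = GF(2)[c]/(c³) and let S = R[[d]] be the formal power series ring over R. Then 1 + c + c² + d is a unit in S, and for every natural number i the coefficient of d^i in (1 + c + c² + d)^{-1} equals: 1 + c if i ≡ 0 (mod 4); 1 + c² if i ≡ 1 (mod 4); 1 + c + c² if i ≡ 2 (mod 4); and 1 if i ≡ 3 (mod 4). -/

import Mathlib

open Polynomial PowerSeries

noncomputable section

/-- The ring `R = GF(2)[c] / (c³)`. -/
abbrev R2 : Type := AdjoinRoot (Polynomial.X ^ 3 : Polynomial (ZMod 2))

/-- The class of the variable `c` in `R = GF(2)[c] / (c³)`. -/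
def cR : R2 := AdjoinRoot.root _

/-- The power series ring `S = R[[d]]`. -/
abbrev S2 : Type := PowerSeries R2

/-- The image of `c` in `S = R[[d]]`. -/
def cS : S2 := PowerSeries.C cR

/-- The variable `d` of `S = R[[d]]`. -/
def dS : S2 := PowerSeries.X

/-- The coefficient of `c²` of an element of `R = GF(2)[c] / (c³)`,
computed via the unique representative polynomial of degree `< 3`. -/
def coefc2 (x : R2) : ZMod 2 :=
  (AdjoinRoot.modByMonicHom (Polynomial.monic_X_pow 3) x).coeff 2

lemma hc3 : cR ^ 3 = 0 := by
  have := AdjoinRoot.isRoot_root (Polynomial.X ^ 3 : Polynomial (ZMod 2))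
  simpa [Polynomial.IsRoot, cR] using this

lemma h2 : (2 : R2) = 0 := by
  have : algebraMap (ZMod 2) R2 (2 : ZMod 2) = (2 : R2) := map_ofNat _ 2
  rw [← this, show (2 : ZMod 2) = 0 from rfl, map_zero]

lemma h4 : (1 + cR) ^ 4 = 1 := by
  linear_combination (2*cR + 3*cR^2) * h2 + (cR + 4) * hc3

lemma hmul : (1 + cR + cR ^ 2) * (1 + cR) = 1 := by
  linear_combination (cR + cR^2) * h2 + hc3

/-- the explicit inverse series -/
def gS : S2 := PowerSeries.mk fun i => (1 + cR) ^ (i + 1)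

lemma key : (1 + cS + cS ^ 2 + dS) * gS = 1 := by
  have hfC : (1 : S2) + cS + cS ^ 2 = PowerSeries.C (1 + cR + cR ^ 2) := by
    simp [cS, map_add, map_pow]
  ext n
  rw [show (1 : S2) + cS + cS ^ 2 + dS = PowerSeries.C (1 + cR + cR ^ 2) + PowerSeries.X by
    rw [← hfC]; rfl]
  rw [add_mul, map_add, PowerSeries.coeff_C_mul]
  cases n with
  | zero =>
    simp [gS, hmul]
  | succ m =>
    rw [PowerSeries.coeff_succ_X_mul]
    simp only [gS, PowerSeries.coeff_mk, PowerSeries.coeff_one]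
    have : (1 + cR + cR ^ 2) * (1 + cR) ^ (m + 1 + 1) + (1 + cR) ^ (m + 1) =
        ((1 + cR + cR ^ 2) * (1 + cR) + 1) * (1 + cR) ^ (m + 1) := by ring
    rw [this, hmul, show (1 : R2) + 1 = 2 by norm_num, h2, zero_mul, if_neg (Nat.succ_ne_zero m)]

theorem inverse_coeffs :
    IsUnit (1 + cS + cS ^ 2 + dS) ∧
      ∀ i : ℕ,
        PowerSeries.coeff i (Ring.inverse (1 + cS + cS ^ 2 + dS)) =
          if i % 4 = 0 then 1 + cR
          else if i % 4 = 1 then 1 + cR ^ 2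
          else if i % 4 = 2 then 1 + cR + cR ^ 2
          else 1 := by
  have hu := IsUnit.of_mul_eq_one _ key
  have hinv : Ring.inverse (1 + cS + cS ^ 2 + dS) = gS := by
    calc Ring.inverse (1 + cS + cS ^ 2 + dS)
        = Ring.inverse (1 + cS + cS ^ 2 + dS) * ((1 + cS + cS ^ 2 + dS) * gS) := by
          rw [key, mul_one]
      _ = (Ring.inverse (1 + cS + cS ^ 2 + dS) * (1 + cS + cS ^ 2 + dS)) * gS := by ring
      _ = gS := by rw [Ring.inverse_mul_cancel _ hu, one_mul]
  refine ⟨hu, fun i => ?_⟩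
  rw [hinv]
  simp only [gS, PowerSeries.coeff_mk]
  have hdiv : i + 1 = 4 * (i / 4) + (i % 4 + 1) := by omega
  rw [hdiv, pow_add, pow_mul, h4, one_pow, one_mul]
  have : i % 4 = 0 ∨ i % 4 = 1 ∨ i % 4 = 2 ∨ i % 4 = 3 := by omega
  rcases this with h | h | h | h <;> rw [h] <;> norm_num
  · linear_combination cR * h2
  · linear_combination (cR + cR^2) * h2 + hc3
  · exact h4

end
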